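/- Let U be a bounded subset of R, let g: U^k -> R^n be L-Lipschitz, let A in R^{m x n}, x in R^n, z in R^m, and y = A x + z. Suppose u_hat minimizes ||A g(u) - y|| over u in U^k, and suppose every coordinate of u_hat satisfies |u_hat_i - [u_hat_i]_b| <= 2^{-b} with [u_hat]_b in U^k. Then for every u_tilde in U^k, ||A (g([u_hat]_b) - x) - z|| <= ||A (g(u_tilde) - x) - z|| + 2^{-b} sqrt(k) sigma_max(A) L, where sigma_max(A) denotes the largest singular value of A. -/

import Mathlib

/-- The Euclidean norm of a vector in `ℝ^n`. -/
noncomputable def euclNorm {n : ℕ} (v : Fin n → ℝ) : ℝ := Real.sqrt (∑ i, v i ^ 2)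

/-- The `b`-bit quantization of a real number: `[x]_b = 2^{-b} ⌊2^b x⌋`. -/
noncomputable def quant (b : ℕ) (x : ℝ) : ℝ := (2 : ℝ) ^ (-(b : ℤ)) * ⌊(2 : ℝ) ^ (b : ℕ) * x⌋

/-- The largest singular value of a matrix, i.e. its operator norm with respect to
Euclidean norms. -/
noncomputable def sigmaMax {m n : ℕ} (A : Matrix (Fin m) (Fin n) ℝ) : ℝ :=
  sSup ((fun v => euclNorm (A.mulVec v)) '' {v : Fin n → ℝ | euclNorm v ≤ 1})

lemma euclNorm_eq {n : ℕ} (v : Fin n → ℝ) :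
    euclNorm v = ‖(WithLp.equiv 2 (Fin n → ℝ)).symm v‖ := by
  rw [EuclideanSpace.norm_eq]
  simp [euclNorm, sq_abs]

noncomputable def Tmap {m n : ℕ} (A : Matrix (Fin m) (Fin n) ℝ) :
    EuclideanSpace ℝ (Fin n) →L[ℝ] EuclideanSpace ℝ (Fin m) :=
  LinearMap.toContinuousLinearMap (Matrix.toEuclideanLin A)

lemma sigmaMax_eq {m n : ℕ} (A : Matrix (Fin m) (Fin n) ℝ) :
    sigmaMax A = ‖Tmap A‖ := by
  rw [← ContinuousLinearMap.sSup_unitClosedBall_eq_norm (Tmap A)]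
  unfold sigmaMax
  congr 1
  ext r
  constructor
  · rintro ⟨v, hv, rfl⟩
    refine ⟨(WithLp.equiv 2 (Fin n → ℝ)).symm v, ?_, ?_⟩
    · simpa [Metric.mem_closedBall, dist_eq_norm, euclNorm_eq] using hv
    · simp [Tmap, LinearMap.coe_toContinuousLinearMap', euclNorm_eq]
  · rintro ⟨w, hw, rfl⟩
    refine ⟨WithLp.equiv 2 (Fin n → ℝ) w, ?_, ?_⟩
    · simp only [Set.mem_setOf_eq, euclNorm_eq]
      simpa [Metric.mem_closedBall, dist_eq_norm] using hw
    · show euclNorm _ = _; rw [euclNorm_eq]; rfl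

lemma sigmaMax_nonneg {m n : ℕ} (A : Matrix (Fin m) (Fin n) ℝ) : 0 ≤ sigmaMax A := by
  rw [sigmaMax_eq]; exact norm_nonneg _

lemma euclNorm_mulVec_le {m n : ℕ} (A : Matrix (Fin m) (Fin n) ℝ) (v : Fin n → ℝ) :
    euclNorm (A.mulVec v) ≤ sigmaMax A * euclNorm v := by
  rw [sigmaMax_eq, euclNorm_eq, euclNorm_eq]
  have := (Tmap A).le_opNorm ((WithLp.equiv 2 (Fin n → ℝ)).symm v)
  simpa [Tmap, LinearMap.coe_toContinuousLinearMap', Matrix.toEuclideanLin_apply] using this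

lemma euclNorm_sub_triangle {n : ℕ} (a c b : Fin n → ℝ) :
    euclNorm (a - c) ≤ euclNorm (a - b) + euclNorm (b - c) := by
  simp only [euclNorm_eq, ← WithLp.toLp_sub]
  rw [← sub_add_sub_cancel a b c, WithLp.equiv_symm_apply, WithLp.toLp_add]
  exact norm_add_le _ _

lemma euclNorm_le_of_coord {n : ℕ} (w : Fin n → ℝ) (c : ℝ) (hc : 0 ≤ c)
    (h : ∀ i, |w i| ≤ c) : euclNorm w ≤ c * Real.sqrt n := by
  unfold euclNorm
  have h1 : ∑ i, w i ^ 2 ≤ ∑ _i : Fin n, c ^ 2 := by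
    apply Finset.sum_le_sum
    intro i _
    calc w i ^ 2 = |w i| ^ 2 := (sq_abs _).symm
      _ ≤ c ^ 2 := by gcongr; exact h i
  calc Real.sqrt (∑ i, w i ^ 2) ≤ Real.sqrt (∑ _i : Fin n, c ^ 2) := Real.sqrt_le_sqrt h1
    _ = c * Real.sqrt n := by
        rw [Finset.sum_const, Finset.card_fin, nsmul_eq_mul, Real.sqrt_mul (by positivity),
          Real.sqrt_sq hc, mul_comm]

/-- If `û` minimizes `‖A g(u) - y‖` over `u ∈ U^k`, where `y = A x + z`, `g` is `L`-Lipschitz,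
every coordinate of `û` is within `2^{-b}` of its `b`-bit quantization, and `[û]_b ∈ U^k`,
then for every `ũ ∈ U^k`,
`‖A(g([û]_b) - x) - z‖ ≤ ‖A(g(ũ) - x) - z‖ + 2^{-b} √k σ_max(A) L`. -/
theorem quantized_minimizer_measurement_error
    {m n k : ℕ} (U : Set ℝ) (hU : Bornology.IsBounded U)
    (g : (Fin k → ℝ) → (Fin n → ℝ)) (L : ℝ) (hL : 0 ≤ L)
    (hLip : ∀ u v : Fin k → ℝ, euclNorm (g u - g v) ≤ L * euclNorm (u - v))
    (A : Matrix (Fin m) (Fin n) ℝ) (x : Fin n → ℝ) (z y : Fin m → ℝ)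
    (hy : y = A.mulVec x + z)
    (b : ℕ) (uhat : Fin k → ℝ) (huhat : ∀ i, uhat i ∈ U)
    (hmin : ∀ u : Fin k → ℝ, (∀ i, u i ∈ U) →
      euclNorm (A.mulVec (g uhat) - y) ≤ euclNorm (A.mulVec (g u) - y))
    (hquant : ∀ i, |uhat i - quant b (uhat i)| ≤ (2 : ℝ) ^ (-(b : ℤ)))
    (hquantU : ∀ i, quant b (uhat i) ∈ U) :
    ∀ utilde : Fin k → ℝ, (∀ i, utilde i ∈ U) →
      euclNorm (A.mulVec (g (fun i => quant b (uhat i)) - x) - z)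
        ≤ euclNorm (A.mulVec (g utilde - x) - z)
          + (2 : ℝ) ^ (-(b : ℤ)) * Real.sqrt k * sigmaMax A * L := by
  intro utilde hut
  set q : Fin k → ℝ := fun i => quant b (uhat i) with hq
  have key : ∀ w : Fin n → ℝ, A.mulVec (w - x) - z = A.mulVec w - y := by
    intro w; rw [hy, Matrix.mulVec_sub]; abel
  rw [key, key]
  have hqbd : euclNorm (q - uhat) ≤ (2 : ℝ) ^ (-(b : ℤ)) * Real.sqrt k := by
    apply euclNorm_le_of_coord _ _ (by positivity)
    intro i
    have := hquant i
    rw [abs_sub_comm] at this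
    simpa [hq] using this
  calc euclNorm (A.mulVec (g q) - y)
      ≤ euclNorm (A.mulVec (g q) - A.mulVec (g uhat)) + euclNorm (A.mulVec (g uhat) - y) :=
        euclNorm_sub_triangle _ _ _
    _ ≤ euclNorm (A.mulVec (g q - g uhat)) + euclNorm (A.mulVec (g utilde) - y) :=
        add_le_add (le_of_eq (by rw [Matrix.mulVec_sub])) (hmin utilde hut)
    _ ≤ sigmaMax A * euclNorm (g q - g uhat) + euclNorm (A.mulVec (g utilde) - y) :=
        add_le_add_left (euclNorm_mulVec_le _ _) _
    _ ≤ sigmaMax A * (L * euclNorm (q - uhat)) + euclNorm (A.mulVec (g utilde) - y) :=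
        add_le_add_left (mul_le_mul_of_nonneg_left (hLip q uhat) (sigmaMax_nonneg A)) _
    _ ≤ sigmaMax A * (L * ((2 : ℝ) ^ (-(b : ℤ)) * Real.sqrt k)) + euclNorm (A.mulVec (g utilde) - y) :=
        add_le_add_left (mul_le_mul_of_nonneg_left (mul_le_mul_of_nonneg_left hqbd hL)
          (sigmaMax_nonneg A)) _
    _ = euclNorm (A.mulVec (g utilde) - y) + (2 : ℝ) ^ (-(b : ℤ)) * Real.sqrt k * sigmaMax A * L := by
        ring
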